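/- Let q be a complex number with q ≠ 0 not a root of unity, and define T(n,k) = q^k (1 + q^{n+1} + q^{k+2}) / [(q^n + q^k + 1)(q^n + q^{k+1} + 1) ∏_{j=1}^{k+1} (1 − q^j)] and G(n,k) = 1 / [(q^n + q^k + 1) ∏_{j=1}^{k} (1 − q^j)]. Then T(n,k) = G(n,k+1) − G(n,k) for all n, k ≥ 0. -/
import Mathlib


open Finset

/-- Example 1: `T(n,k) = G(n,k+1) - G(n,k)`, i.e. `(1, G)` is a `qZ`-pair for `T`. -/
theorem example1_telescopes (q : ℂ) (hq : q ≠ 0)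
    (hq1 : ∀ n : ℕ, 0 < n → q ^ n ≠ 1)
    (h3 : ∀ n k : ℕ, q ^ n + q ^ k + 1 ≠ 0) :
    ∀ n k : ℕ,
      q ^ k * (1 + q ^ (n + 1) + q ^ (k + 2)) /
        ((q ^ n + q ^ k + 1) * (q ^ n + q ^ (k + 1) + 1) *
          ∏ j ∈ Finset.Icc 1 (k + 1), (1 - q ^ j)) =
      1 / ((q ^ n + q ^ (k + 1) + 1) * ∏ j ∈ Finset.Icc 1 (k + 1), (1 - q ^ j)) -
      1 / ((q ^ n + q ^ k + 1) * ∏ j ∈ Finset.Icc 1 k, (1 - q ^ j)) := by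
  intro n k
  have hP : ∀ m : ℕ, (∏ j ∈ Finset.Icc 1 m, (1 - q ^ j)) ≠ 0 := by
    intro m
    refine Finset.prod_ne_zero_iff.mpr fun j hj => ?_
    have := hq1 j (Finset.mem_Icc.mp hj).1
    intro h
    exact this (by linear_combination -h)
  have hsplit : (∏ j ∈ Finset.Icc 1 (k + 1), (1 - q ^ j)) =
      (∏ j ∈ Finset.Icc 1 k, (1 - q ^ j)) * (1 - q ^ (k + 1)) := by
    rw [← Finset.prod_Icc_succ_top (Nat.le_add_left 1 k)]
  rw [hsplit]
  have hA := h3 n k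
  have hB := h3 n (k + 1)
  have hk1 : (1 : ℂ) - q ^ (k + 1) ≠ 0 := by
    intro h
    exact hq1 (k+1) (Nat.succ_pos k) (by linear_combination -h)
  have hPk := hP k
  field_simp [hA, hB, hk1, hPk]
  ring
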